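/- Let a > b > 0 and t ∈ ℝ, and let A = P₀(t), B = P₁(t), C = P₂(t) be the vertices of the triangle T(t) of the homothetic Poncelet family, with sidelengths α = |B − C|, β = |C − A|, γ = |A − B|. Then the Brocard midpoint X₃₉ = [α²(β² + γ²)·A + β²(γ² + α²)·B + γ²(α² + β²)·C] / [α²(β² + γ²) + β²(γ² + α²) + γ²(α² + β²)] equals ( −a(a² − b²)·cos(3t)/(2(a² + 3b²)), −b(a² − b²)·sin(3t)/(2(3a² + b²)) ). In particular, as t varies, the locus of X₃₉ is the ellipse centered at the origin, axis-aligned with the pair, with semi-axes a(a² − b²)/(2(a² + 3b²)) and b(a² − b²)/(2(3a² + b²)). -/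

import Mathlib

open Real

/-- A point of the Euclidean plane `ℝ²`. -/
noncomputable def pt (x y : ℝ) : EuclideanSpace ℝ (Fin 2) := WithLp.toLp 2 ![x, y]

/-- Vertex `k` of the triangle `T(t)` of the homothetic Poncelet family. -/
noncomputable def homP (a b t : ℝ) (k : ℕ) : EuclideanSpace ℝ (Fin 2) :=
  pt (a * Real.cos (t + 2 * π * k / 3)) (b * Real.sin (t + 2 * π * k / 3))

/-- The ellipse with semi-axes `p, q` centered at the origin. -/
def ellipse (p q : ℝ) : Set (EuclideanSpace ℝ (Fin 2)) :=
  {z | z 0 ^ 2 / p ^ 2 + z 1 ^ 2 / q ^ 2 = 1}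

/-- The Brocard midpoint `X₃₉` of triangle `ABC`: the point with homogeneous
barycentric coordinates `α²(β² + γ²) : β²(γ² + α²) : γ²(α² + β²)`, where
`α = |B − C|, β = |C − A|, γ = |A − B|`. -/
noncomputable def X39 (A B C : EuclideanSpace ℝ (Fin 2)) : EuclideanSpace ℝ (Fin 2) :=
  let α := dist B C
  let β := dist C A
  let γ := dist A B
  let w₁ := α ^ 2 * (β ^ 2 + γ ^ 2)
  let w₂ := β ^ 2 * (γ ^ 2 + α ^ 2)
  let w₃ := γ ^ 2 * (α ^ 2 + β ^ 2)
  (w₁ + w₂ + w₃)⁻¹ • (w₁ • A + w₂ • B + w₃ • C)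

lemma pt_congr {x y x' y' : ℝ} (hx : x = x') (hy : y = y') : pt x y = pt x' y' := by
  rw [hx, hy]

lemma dist_pt_sq (x1 y1 x2 y2 : ℝ) :
    dist (pt x1 y1) (pt x2 y2) ^ 2 = (x1 - x2) ^ 2 + (y1 - y2) ^ 2 := by
  rw [EuclideanSpace.dist_eq, Real.sq_sqrt (by positivity)]
  simp [pt, Fin.sum_univ_two, Real.dist_eq, sq_abs]

lemma pt_smul (w x y : ℝ) : w • pt x y = pt (w * x) (w * y) := by
  ext i; fin_cases i <;> simp [pt]

lemma pt_add (x y x' y' : ℝ) : pt x y + pt x' y' = pt (x + x') (y + y') := by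
  ext i; fin_cases i <;> simp [pt]

lemma X39_pt (x1 y1 x2 y2 x3 y3 u v W : ℝ)
    (hW : ((x2 - x3) ^ 2 + (y2 - y3) ^ 2) * (((x3 - x1) ^ 2 + (y3 - y1) ^ 2) + ((x1 - x2) ^ 2 + (y1 - y2) ^ 2))
        + ((x3 - x1) ^ 2 + (y3 - y1) ^ 2) * (((x1 - x2) ^ 2 + (y1 - y2) ^ 2) + ((x2 - x3) ^ 2 + (y2 - y3) ^ 2))
        + ((x1 - x2) ^ 2 + (y1 - y2) ^ 2) * (((x2 - x3) ^ 2 + (y2 - y3) ^ 2) + ((x3 - x1) ^ 2 + (y3 - y1) ^ 2)) = W)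
    (hW0 : W ≠ 0)
    (hx : W * u = ((x2 - x3) ^ 2 + (y2 - y3) ^ 2) * (((x3 - x1) ^ 2 + (y3 - y1) ^ 2) + ((x1 - x2) ^ 2 + (y1 - y2) ^ 2)) * x1
        + ((x3 - x1) ^ 2 + (y3 - y1) ^ 2) * (((x1 - x2) ^ 2 + (y1 - y2) ^ 2) + ((x2 - x3) ^ 2 + (y2 - y3) ^ 2)) * x2
        + ((x1 - x2) ^ 2 + (y1 - y2) ^ 2) * (((x2 - x3) ^ 2 + (y2 - y3) ^ 2) + ((x3 - x1) ^ 2 + (y3 - y1) ^ 2)) * x3)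
    (hy : W * v = ((x2 - x3) ^ 2 + (y2 - y3) ^ 2) * (((x3 - x1) ^ 2 + (y3 - y1) ^ 2) + ((x1 - x2) ^ 2 + (y1 - y2) ^ 2)) * y1
        + ((x3 - x1) ^ 2 + (y3 - y1) ^ 2) * (((x1 - x2) ^ 2 + (y1 - y2) ^ 2) + ((x2 - x3) ^ 2 + (y2 - y3) ^ 2)) * y2
        + ((x1 - x2) ^ 2 + (y1 - y2) ^ 2) * (((x2 - x3) ^ 2 + (y2 - y3) ^ 2) + ((x3 - x1) ^ 2 + (y3 - y1) ^ 2)) * y3) :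
    X39 (pt x1 y1) (pt x2 y2) (pt x3 y3) = pt u v := by
  simp only [X39, dist_pt_sq, pt_smul, pt_add]
  rw [hW]
  refine pt_congr ?_ ?_
  · field_simp
    linear_combination -hx
  · field_simp
    linear_combination -hy

lemma homP_eval_X39 (a b : ℝ) (ha : 0 < a) (hb : 0 < b) (t : ℝ) :
    X39 (homP a b t 0) (homP a b t 1) (homP a b t 2) =
      pt (-(a * (a ^ 2 - b ^ 2) * Real.cos (3 * t)) / (2 * (a ^ 2 + 3 * b ^ 2)))
         (-(b * (a ^ 2 - b ^ 2) * Real.sin (3 * t)) / (2 * (3 * a ^ 2 + b ^ 2))) := by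
  have h0 : homP a b t 0 = pt (a * Real.cos t) (b * Real.sin t) := by
    simp [homP]
  have h1 : homP a b t 1 =
      pt (a * (-(1/2) * Real.cos t - Real.sqrt 3 / 2 * Real.sin t))
         (b * (-(1/2) * Real.sin t + Real.sqrt 3 / 2 * Real.cos t)) := by
    have e : t + 2 * π * ((1:ℕ):ℝ) / 3 = t + (π - π / 3) := by push_cast; ring
    simp only [homP, e, Real.cos_add, Real.sin_add, Real.cos_pi_sub, Real.sin_pi_sub,
      Real.cos_pi_div_three, Real.sin_pi_div_three]
    exact pt_congr (by ring) (by ring)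
  have h2 : homP a b t 2 =
      pt (a * (-(1/2) * Real.cos t + Real.sqrt 3 / 2 * Real.sin t))
         (b * (-(1/2) * Real.sin t - Real.sqrt 3 / 2 * Real.cos t)) := by
    have e : t + 2 * π * ((2:ℕ):ℝ) / 3 = t + (π + π / 3) := by push_cast; ring
    simp only [homP, e, Real.cos_add, Real.sin_add, Real.cos_pi, Real.sin_pi,
      Real.cos_pi_div_three, Real.sin_pi_div_three]
    exact pt_congr (by ring) (by ring)
  have hr : Real.sqrt 3 ^ 2 = 3 := Real.sq_sqrt (by norm_num)
  have hp : Real.sin t ^ 2 + Real.cos t ^ 2 = 1 := Real.sin_sq_add_cos_sq t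
  have hd1 : (2 * (a ^ 2 + 3 * b ^ 2) : ℝ) ≠ 0 := by positivity
  have hd2 : (2 * (3 * a ^ 2 + b ^ 2) : ℝ) ≠ 0 := by positivity
  rw [h0, h1, h2]
  refine X39_pt _ _ _ _ _ _ _ _
      (((81:ℝ)/8) * b ^ 4 + ((135:ℝ)/4) * a ^ 2 * b ^ 2 + ((81:ℝ)/8) * a ^ 4) ?_ ?_ ?_ ?_
  · linear_combination (((27:ℝ)/4)*b^4*(Real.cos t)^2*(Real.sin t)^2 + ((27:ℝ)/8)*b^4*(Real.cos t)^4 + ((9:ℝ)/8)*b^4*(Real.cos t)^4*(Real.sqrt 3)^2 + ((45:ℝ)/4)*a^2*b^2*(Real.sin t)^4 + ((63:ℝ)/4)*a^2*b^2*(Real.cos t)^2*(Real.sin t)^2 + ((9:ℝ)/4)*a^2*b^2*(Real.cos t)^2*(Real.sin t)^2*(Real.sqrt 3)^2 + ((45:ℝ)/4)*a^2*b^2*(Real.cos t)^4 + ((27:ℝ)/8)*a^4*(Real.sin t)^4 + ((9:ℝ)/8)*a^4*(Real.sin t)^4*(Real.sqrt 3)^2 + ((27:ℝ)/4)*a^4*(Real.cos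 t)^2*(Real.sin t)^2) * hr + (((81:ℝ)/8)*b^4 + ((81:ℝ)/8)*b^4*(Real.sin t)^2 + ((81:ℝ)/8)*b^4*(Real.cos t)^2 + ((135:ℝ)/4)*a^2*b^2 + ((135:ℝ)/4)*a^2*b^2*(Real.sin t)^2 + ((135:ℝ)/4)*a^2*b^2*(Real.cos t)^2 + ((81:ℝ)/8)*a^4 + ((81:ℝ)/8)*a^4*(Real.sin t)^2 + ((81:ℝ)/8)*a^4*(Real.cos t)^2) * hp
  · have : (0:ℝ) < ((81:ℝ)/8) * b ^ 4 + ((135:ℝ)/4) * a ^ 2 * b ^ 2 + ((81:ℝ)/8) * a ^ 4 := by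
      positivity
    exact ne_of_gt this
  · rw [← mul_div_assoc, div_eq_iff hd1, Real.cos_three_mul]
    linear_combination (((27:ℝ)/4)*a*b^6*(Real.cos t)^3*(Real.sin t)^2 + ((9:ℝ)/1)*a*b^6*(Real.cos t)^3*(Real.sin t)^2*(Real.sqrt 3)^2 + ((-27:ℝ)/8)*a*b^6*(Real.cos t)^5 + ((-9:ℝ)/8)*a*b^6*(Real.cos t)^5*(Real.sqrt 3)^2 + ((81:ℝ)/4)*a^3*b^4*(Real.cos t)*(Real.sin t)^4 + ((9:ℝ)/1)*a^3*b^4*(Real.cos t)*(Real.sin t)^4*(Real.sqrt 3)^2 + ((-9:ℝ)/2)*a^3*b^4*(Real.cos t)^3*(Real.sin t)^2 + ((-33:ℝ)/4)*a^3*b^4*(Real.cos t)^3*(Real.sin t)^2*(Real.sqrt 3)^2 + ((-63:ℝ)/8)*a^3*b^4*(Real.cos t)^5 + ((-3:ℝ)/8)*a^3*b^4*(Real.cos t)^5*(Real.sqrt 3)^2 + ((-189:ℝ)/8)*a^5*b^2*(Real.cos t)*(Real.sin t)^4 + ((-57:ℝ)/8)*a^5*b^2*(Real.cos t)*(Real.sin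 t)^4*(Real.sqrt 3)^2 + ((-45:ℝ)/2)*a^5*b^2*(Real.cos t)^3*(Real.sin t)^2 + ((-15:ℝ)/4)*a^5*b^2*(Real.cos t)^3*(Real.sin t)^2*(Real.sqrt 3)^2 + ((-9:ℝ)/4)*a^5*b^2*(Real.cos t)^5 + ((-81:ℝ)/8)*a^7*(Real.cos t)*(Real.sin t)^4 + ((-27:ℝ)/8)*a^7*(Real.cos t)*(Real.sin t)^4*(Real.sqrt 3)^2 + ((-27:ℝ)/4)*a^7*(Real.cos t)^3*(Real.sin t)^2) * hr + (((243:ℝ)/8)*a*b^6*(Real.cos t) + ((243:ℝ)/8)*a*b^6*(Real.cos t)*(Real.sin t)^2 + ((-81:ℝ)/8)*a*b^6*(Real.cos t)^3 + ((567:ℝ)/8)*a^3*b^4*(Real.cos t) + ((567:ℝ)/8)*a^3*b^4*(Real.cos t)*(Real.sin t)^2 + ((-189:ℝ)/8)*a^3*b^4*(Real.cos t)^3 + ((-567:ℝ)/8)*a^5*b^2*(Real.cos t) + ((-567:ℝ)/8)*a^5*b^2*(Real.cos t)*(Real.sin t)^2 + ((189:ℝ)/8)*a^5*b^2*(Real.cos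 t)^3 + ((-243:ℝ)/8)*a^7*(Real.cos t) + ((-243:ℝ)/8)*a^7*(Real.cos t)*(Real.sin t)^2 + ((81:ℝ)/8)*a^7*(Real.cos t)^3) * hp
  · rw [← mul_div_assoc, div_eq_iff hd2, Real.sin_three_mul]
    linear_combination (((-27:ℝ)/4)*b^7*(Real.cos t)^2*(Real.sin t)^3 + ((-81:ℝ)/8)*b^7*(Real.cos t)^4*(Real.sin t) + ((-27:ℝ)/8)*b^7*(Real.cos t)^4*(Real.sin t)*(Real.sqrt 3)^2 + ((-9:ℝ)/4)*a^2*b^5*(Real.sin t)^5 + ((-45:ℝ)/2)*a^2*b^5*(Real.cos t)^2*(Real.sin t)^3 + ((-15:ℝ)/4)*a^2*b^5*(Real.cos t)^2*(Real.sin t)^3*(Real.sqrt 3)^2 + ((-189:ℝ)/8)*a^2*b^5*(Real.cos t)^4*(Real.sin t) + ((-57:ℝ)/8)*a^2*b^5*(Real.cos t)^4*(Real.sin t)*(Real.sqrt 3)^2 + ((-63:ℝ)/8)*a^4*b^3*(Real.sin t)^5 + ((-3:ℝ)/8)*a^4*b^3*(Real.sin t)^5*(Real.sqrt 3)^2 +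 ((-9:ℝ)/2)*a^4*b^3*(Real.cos t)^2*(Real.sin t)^3 + ((-33:ℝ)/4)*a^4*b^3*(Real.cos t)^2*(Real.sin t)^3*(Real.sqrt 3)^2 + ((81:ℝ)/4)*a^4*b^3*(Real.cos t)^4*(Real.sin t) + ((9:ℝ)/1)*a^4*b^3*(Real.cos t)^4*(Real.sin t)*(Real.sqrt 3)^2 + ((-27:ℝ)/8)*a^6*b*(Real.sin t)^5 + ((-9:ℝ)/8)*a^6*b*(Real.sin t)^5*(Real.sqrt 3)^2 + ((27:ℝ)/4)*a^6*b*(Real.cos t)^2*(Real.sin t)^3 + ((9:ℝ)/1)*a^6*b*(Real.cos t)^2*(Real.sin t)^3*(Real.sqrt 3)^2) * hr + (((-243:ℝ)/8)*b^7*(Real.sin t) + ((81:ℝ)/8)*b^7*(Real.sin t)^3 + ((-243:ℝ)/8)*b^7*(Real.cos t)^2*(Real.sin t) + ((-567:ℝ)/8)*a^2*b^5*(Real.sin t) + ((189:ℝ)/8)*a^2*b^5*(Real.sin t)^3 + ((-567:ℝ)/8)*a^2*b^5*(Real.cos t)^2*(Real.sin t) + ((567:ℝ)/8)*a^4*b^3*(Real.sin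 t) + ((-189:ℝ)/8)*a^4*b^3*(Real.sin t)^3 + ((567:ℝ)/8)*a^4*b^3*(Real.cos t)^2*(Real.sin t) + ((243:ℝ)/8)*a^6*b*(Real.sin t) + ((-81:ℝ)/8)*a^6*b*(Real.sin t)^3 + ((243:ℝ)/8)*a^6*b*(Real.cos t)^2*(Real.sin t)) * hp

lemma pt_coords (z : EuclideanSpace ℝ (Fin 2)) : pt (z 0) (z 1) = z := by
  ext i; fin_cases i <;> simp [pt]

/-- Over the homothetic Poncelet family, the Brocard midpoint `X₃₉` of `T(t)` equals
`(−a(a² − b²)cos 3t/(2(a² + 3b²)), −b(a² − b²)sin 3t/(2(3a² + b²)))`; in particular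
its locus, as `t` varies, is the concentric axis-aligned ellipse with semi-axes
`a(a² − b²)/(2(a² + 3b²))` and `b(a² − b²)/(2(3a² + b²))`. -/
theorem homothetic_X39_locus (a b : ℝ) (hab : a > b) (hb : 0 < b) :
    (∀ t : ℝ,
      X39 (homP a b t 0) (homP a b t 1) (homP a b t 2) =
        pt (-(a * (a ^ 2 - b ^ 2) * Real.cos (3 * t)) / (2 * (a ^ 2 + 3 * b ^ 2)))
           (-(b * (a ^ 2 - b ^ 2) * Real.sin (3 * t)) / (2 * (3 * a ^ 2 + b ^ 2)))) ∧
    Set.range (fun t : ℝ => X39 (homP a b t 0) (homP a b t 1) (homP a b t 2)) =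
      ellipse (a * (a ^ 2 - b ^ 2) / (2 * (a ^ 2 + 3 * b ^ 2)))
              (b * (a ^ 2 - b ^ 2) / (2 * (3 * a ^ 2 + b ^ 2))) := by
  have ha : 0 < a := lt_trans hb hab
  have he := homP_eval_X39 a b ha hb
  refine ⟨he, ?_⟩
  obtain ⟨p, hpdef⟩ : ∃ p : ℝ, p = a * (a ^ 2 - b ^ 2) / (2 * (a ^ 2 + 3 * b ^ 2)) := ⟨_, rfl⟩
  obtain ⟨q, hqdef⟩ : ∃ q : ℝ, q = b * (a ^ 2 - b ^ 2) / (2 * (3 * a ^ 2 + b ^ 2)) := ⟨_, rfl⟩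
  rw [← hpdef, ← hqdef]
  have hab2 : 0 < a ^ 2 - b ^ 2 := by nlinarith
  have hp0 : 0 < p := hpdef ▸ div_pos (by positivity) (by positivity)
  have hq0 : 0 < q := hqdef ▸ div_pos (by positivity) (by positivity)
  have hcoord : ∀ t : ℝ,
      X39 (homP a b t 0) (homP a b t 1) (homP a b t 2) =
        pt (-(p * Real.cos (3 * t))) (-(q * Real.sin (3 * t))) := by
    intro t
    rw [he t]
    exact pt_congr (by rw [hpdef]; ring) (by rw [hqdef]; ring)
  ext z
  simp only [Set.mem_range, ellipse, Set.mem_setOf_eq]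
  constructor
  · rintro ⟨t, rfl⟩
    rw [hcoord t]
    have e1 : ∀ x y : ℝ, x ≠ 0 → (-(x * y)) ^ 2 / x ^ 2 = y ^ 2 := by
      intro x y hx; field_simp
    simp only [pt]
    show (-(p * Real.cos (3*t))) ^ 2 / p ^ 2 + (-(q * Real.sin (3*t))) ^ 2 / q ^ 2 = 1
    rw [e1 _ _ hp0.ne', e1 _ _ hq0.ne']
    exact Real.cos_sq_add_sin_sq (3*t)
  · intro hz
    set x0 := -(z 0) / p with hx0
    set y0 := -(z 1) / q with hy0
    have huv : x0 ^ 2 + y0 ^ 2 = 1 := by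
      rw [hx0, hy0, show (-(z 0) / p) ^ 2 = z 0 ^ 2 / p ^ 2 from by ring,
        show (-(z 1) / q) ^ 2 = z 1 ^ 2 / q ^ 2 from by ring]
      exact hz
    have hy1 : -1 ≤ y0 ∧ y0 ≤ 1 := by
      constructor <;> nlinarith [sq_nonneg x0, sq_nonneg (y0 - 1), sq_nonneg (y0 + 1)]
    have hθ : ∃ θ : ℝ, Real.cos θ = x0 ∧ Real.sin θ = y0 := by
      rcases le_or_gt 0 x0 with h | h
      · refine ⟨Real.arcsin y0, ?_, Real.sin_arcsin hy1.1 hy1.2⟩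
        rw [Real.cos_arcsin, show 1 - y0 ^ 2 = x0 ^ 2 by linarith, Real.sqrt_sq h]
      · refine ⟨π - Real.arcsin y0, ?_, by rw [Real.sin_pi_sub, Real.sin_arcsin hy1.1 hy1.2]⟩
        rw [Real.cos_pi_sub, Real.cos_arcsin, show 1 - y0 ^ 2 = x0 ^ 2 by linarith,
          Real.sqrt_sq_eq_abs, abs_of_neg h, neg_neg]
    obtain ⟨θ, hcθ, hsθ⟩ := hθ
    refine ⟨θ / 3, ?_⟩
    rw [hcoord (θ / 3), show 3 * (θ / 3) = θ by ring, hcθ, hsθ]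
    have hz0 : -(p * x0) = z 0 := by rw [hx0]; field_simp
    have hz1 : -(q * y0) = z 1 := by rw [hy0]; field_simp
    rw [hz0, hz1, pt_coords]
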